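/- Let G = (V, E) be a multigraph and suppose k* is the smallest positive integer such that G is a k*-trail. Then the smallest positive integer k for which G contains a k-trail is either k* or k* − 1. -/

import Mathlib

/-- A multigraph on vertex type `V`: a finite multiset of unordered pairs of
vertices (loops and parallel edges allowed). -/
structure Multigraph (V : Type) where
  edges : Multiset (Sym2 V)

namespace Multigraph

open Classical in
/-- The degree of a vertex: number of edge-endpoints at `v`, a loop counting twice. -/
noncomputable def deg {V : Type} (G : Multigraph V) (v : V) : ℕ :=
  (G.edges.map fun e => if e = Sym2.diag v then 2 else if v ∈ e then 1 else 0).sum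

/-- Adjacency in a multigraph. -/
def Adj {V : Type} (G : Multigraph V) (u v : V) : Prop := s(u, v) ∈ G.edges

/-- A multigraph is connected if it has a vertex and any two vertices are joined by a walk. -/
def Connected {V : Type} (G : Multigraph V) : Prop :=
  Nonempty V ∧ ∀ u v : V, Relation.ReflTransGen G.Adj u v

open Classical in
/-- `G` is the homomorphic image of `H` by the onto function `φ`: for all `u v`,
the number of edges of `G` between `u` and `v` equals the number of edges of `H`
whose endpoints are mapped by `φ` to `{u, v}`. -/
def IsHomImage {V W : Type} (G : Multigraph V) (H : Multigraph W) (φ : W → V) : Prop :=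
  Function.Surjective φ ∧
    ∀ u v : V, G.edges.count s(u, v) = (H.edges.map (Sym2.map φ)).count s(u, v)

/-- A tree: a connected multigraph with `|F| = |W| - 1`. -/
def IsTree {W : Type} (H : Multigraph W) : Prop :=
  Connected H ∧ Multiset.card H.edges + 1 = Nat.card W

/-- A multigraph is a `k`-trail if it is the homomorphic image of a (finite)
connected multigraph of maximum degree at most `k`. -/
def IsKTrail {V : Type} (G : Multigraph V) (k : ℕ) : Prop :=
  ∃ (W : Type) (_ : Finite W) (H : Multigraph W) (φ : W → V),
    Connected H ∧ (∀ w, H.deg w ≤ k) ∧ IsHomImage G H φ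

/-- `G` contains a `k`-trail if some submultiset `U` of its edges gives a `k`-trail `(V, U)`. -/
def ContainsKTrail {V : Type} (G : Multigraph V) (k : ℕ) : Prop :=
  ∃ U : Multiset (Sym2 V), U ≤ G.edges ∧ IsKTrail (Multigraph.mk U) k

/-- `lam` is a feasible multiplicity vector for `G`. -/
def FeasibleMult {V : Type} (G : Multigraph V) (lam : V → ℕ) : Prop :=
  ∃ (W : Type) (_ : Finite W) (H : Multigraph W) (φ : W → V),
    Connected H ∧ IsHomImage G H φ ∧ ∀ v : V, Nat.card (φ ⁻¹' {v}) = lam v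

end Multigraph

open Multigraph

open Multigraph Function

section Aux
variable {V W : Type}

open Classical in
noncomputable def wt (e : Sym2 V) (v : V) : ℕ :=
  if e = Sym2.diag v then 2 else if v ∈ e then 1 else 0

lemma deg_eq (A : Multiset (Sym2 V)) (v : V) :
    (Multigraph.mk A).deg v = (A.map (wt · v)).sum := rfl

lemma wt_eq_zero {e : Sym2 V} {v : V} (h : v ∉ e) : wt e v = 0 := by
  rw [wt, if_neg, if_neg h]
  rintro rfl; exact h (by simp [Sym2.diag, Sym2.mem_iff])

lemma one_le_wt {e : Sym2 V} {v : V} (h : v ∈ e) : 1 ≤ wt e v := by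
  rw [wt]; split <;> simp [h]

lemma wt_loop (v : V) : wt s(v,v) v = 2 := by
  rw [wt, if_pos (show s(v,v) = Sym2.diag v from rfl)]

lemma wt_pair {u v : V} (h : u ≠ v) : wt s(u,v) v = 1 := by
  rw [wt, if_neg, if_pos (by simp [Sym2.mem_iff])]
  simp only [Sym2.diag, Sym2.eq_iff]
  rintro (⟨rfl, -⟩ | ⟨rfl, -⟩) <;> exact h rfl

lemma wt_pair' {u v : V} (h : u ≠ v) : wt s(u,v) u = 1 := by
  rw [Sym2.eq_swap]; exact wt_pair h.symm

lemma wt_map_of_injective {f : V → W} (hf : Injective f) (e : Sym2 V) (x : V) :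
    wt (Sym2.map f e) (f x) = wt e x := by
  unfold wt
  have h1 : Sym2.map f e = Sym2.diag (f x) ↔ e = Sym2.diag x := by
    constructor
    · intro h; apply Sym2.map.injective hf; rw [h]; simp [Sym2.diag, Sym2.map_pair_eq]
    · rintro rfl; simp [Sym2.diag, Sym2.map_pair_eq]
  have h2 : f x ∈ Sym2.map f e ↔ x ∈ e := by
    rw [Sym2.mem_map]
    constructor
    · rintro ⟨a, ha, hax⟩; rwa [hf hax] at ha
    · intro h; exact ⟨x, h, rfl⟩
  split
  · rw [if_pos (h1.mp ‹_›)]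
  · rw [if_neg (fun h => ‹¬ _› (h1.mpr h))]
    split
    · rw [if_pos (h2.mp ‹_›)]
    · rw [if_neg (fun h => ‹¬ _› (h2.mpr h))]

lemma wt_map_of_not_mem_range {f : V → W} (e : Sym2 V) {y : W} (hy : ∀ x, f x ≠ y) :
    wt (Sym2.map f e) y = 0 := by
  apply wt_eq_zero
  rw [Sym2.mem_map]
  rintro ⟨a, -, ha⟩; exact hy a ha

lemma deg_mk_add (A B : Multiset (Sym2 V)) (v : V) :
    (Multigraph.mk (A + B)).deg v = (Multigraph.mk A).deg v + (Multigraph.mk B).deg v := by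
  simp [deg_eq, Multiset.map_add]

lemma deg_mk_zero (v : V) : (Multigraph.mk (0 : Multiset (Sym2 V))).deg v = 0 := rfl

lemma deg_mk_singleton (e : Sym2 V) (v : V) :
    (Multigraph.mk ({e} : Multiset (Sym2 V))).deg v = wt e v := by
  simp [deg_eq]

lemma deg_mk_cons (e : Sym2 V) (A : Multiset (Sym2 V)) (v : V) :
    (Multigraph.mk (e ::ₘ A)).deg v = wt e v + (Multigraph.mk A).deg v := by
  simp [deg_eq]

lemma deg_mono {A B : Multiset (Sym2 V)} (h : A ≤ B) (v : V) :
    (Multigraph.mk A).deg v ≤ (Multigraph.mk B).deg v := by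
  obtain ⟨C, rfl⟩ := Multiset.le_iff_exists_add.mp h
  rw [deg_mk_add]; omega

lemma supported_iff {A : Multiset (Sym2 V)} {v : V} :
    (∃ e ∈ A, v ∈ e) ↔ 1 ≤ (Multigraph.mk A).deg v := by
  constructor
  · rintro ⟨e, he, hv⟩
    calc 1 ≤ wt e v := one_le_wt hv
    _ = (Multigraph.mk ({e} : Multiset (Sym2 V))).deg v := (deg_mk_singleton e v).symm
    _ ≤ _ := deg_mono (Multiset.singleton_le.mpr he) v
  · intro h
    by_contra hc
    push_neg at hc
    have : (Multigraph.mk A).deg v = 0 := by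
      rw [deg_eq]
      apply Multiset.sum_eq_zero
      intro x hx
      rw [Multiset.mem_map] at hx
      obtain ⟨e, he, rfl⟩ := hx
      exact wt_eq_zero (hc e he)
    omega

lemma two_le_deg {A : Multiset (Sym2 V)} {e₁ e₂ : Sym2 V} {v : V}
    (h1 : e₁ ∈ A) (h2 : e₂ ∈ A) (hne : e₁ ≠ e₂) (hv1 : v ∈ e₁) (hv2 : v ∈ e₂) :
    2 ≤ (Multigraph.mk A).deg v := by
  classical
  have hA : e₁ ::ₘ A.erase e₁ = A := Multiset.cons_erase h1
  have h2' : e₂ ∈ A.erase e₁ := (Multiset.mem_erase_of_ne hne.symm).mpr h2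
  calc 2 = 1 + 1 := rfl
  _ ≤ wt e₁ v + (Multigraph.mk (A.erase e₁)).deg v := by
      have := one_le_wt hv1
      have := supported_iff.mp ⟨e₂, h2', hv2⟩
      omega
  _ = (Multigraph.mk (e₁ ::ₘ A.erase e₁)).deg v := (deg_mk_cons _ _ _).symm
  _ = _ := by rw [hA]

end Aux

section Pend
variable {V W : Type}

lemma isHomImage_iff {G : Multigraph V} {H : Multigraph W} {φ : W → V} :
    IsHomImage G H φ ↔ Surjective φ ∧ H.edges.map (Sym2.map φ) = G.edges := by
  unfold IsHomImage
  refine and_congr_right fun _ => ?_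
  classical
  constructor
  · intro h
    rw [Multiset.ext]
    intro e
    induction e using Sym2.ind with
    | _ u v => exact (h u v).symm
  · intro h u v; rw [h]

/-- Attach a pendant vertex to `w`. -/
def pend (H : Multigraph W) (w : W) : Multigraph (W ⊕ Unit) :=
  ⟨H.edges.map (Sym2.map Sum.inl) + {s(Sum.inl w, Sum.inr ())}⟩

lemma deg_map_inl (A : Multiset (Sym2 W)) (x : W) :
    (Multigraph.mk (A.map (Sym2.map (Sum.inl : W → W ⊕ Unit)))).deg (Sum.inl x)
      = (Multigraph.mk A).deg x := by
  rw [deg_eq, deg_eq, Multiset.map_map]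
  congr 1
  apply Multiset.map_congr rfl
  intro e _
  exact wt_map_of_injective Sum.inl_injective e x

lemma deg_map_inl_inr (A : Multiset (Sym2 W)) (t : Unit) :
    (Multigraph.mk (A.map (Sym2.map (Sum.inl : W → W ⊕ Unit)))).deg (Sum.inr t) = 0 := by
  rw [deg_eq, Multiset.map_map]
  apply Multiset.sum_eq_zero
  intro y hy
  rw [Multiset.mem_map] at hy
  obtain ⟨e, -, rfl⟩ := hy
  exact wt_map_of_not_mem_range e (fun a => Sum.inl_ne_inr)

open Classical in
lemma pend_deg_inl (H : Multigraph W) (w x : W) :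
    (pend H w).deg (Sum.inl x) = H.deg x + (if x = w then 1 else 0) := by
  have : (pend H w).deg (Sum.inl x) =
      (Multigraph.mk (H.edges.map (Sym2.map Sum.inl))).deg (Sum.inl x)
        + (Multigraph.mk ({s(Sum.inl w, Sum.inr ())} : Multiset (Sym2 (W ⊕ Unit)))).deg (Sum.inl x) :=
    deg_mk_add _ _ _
  rw [this, deg_map_inl, deg_mk_singleton]
  congr 1
  by_cases hxw : x = w
  · subst hxw
    rw [if_pos rfl, wt_pair' (by simp)]
  · rw [if_neg hxw, wt_eq_zero]
    simp [Sym2.mem_iff, hxw]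

lemma pend_deg_inr (H : Multigraph W) (w : W) (t : Unit) :
    (pend H w).deg (Sum.inr t) = 1 := by
  have : (pend H w).deg (Sum.inr t) =
      (Multigraph.mk (H.edges.map (Sym2.map Sum.inl))).deg (Sum.inr t)
        + (Multigraph.mk ({s(Sum.inl w, Sum.inr ())} : Multiset (Sym2 (W ⊕ Unit)))).deg (Sum.inr t) :=
    deg_mk_add _ _ _
  rw [this, deg_map_inl_inr, deg_mk_singleton, wt_pair (by simp)]

lemma pend_conn {H : Multigraph W} (hc : Connected H) (w : W) : Connected (pend H w) := by
  have hlift : ∀ x y : W, H.Adj x y → (pend H w).Adj (Sum.inl x) (Sum.inl y) := by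
    intro x y h
    show s(Sum.inl x, Sum.inl y) ∈ _
    rw [← Sym2.map_pair_eq]
    exact Multiset.mem_add.mpr (Or.inl (Multiset.mem_map_of_mem _ h))
  have hstep : (pend H w).Adj (Sum.inl w) (Sum.inr ()) := by
    show s(Sum.inl w, Sum.inr ()) ∈ _
    exact Multiset.mem_add.mpr (Or.inr (Multiset.mem_singleton_self _))
  have hreach : ∀ x : W, Relation.ReflTransGen (pend H w).Adj (Sum.inl x) (Sum.inl w) :=
    fun x => Relation.ReflTransGen.lift _ hlift _ _ (hc.2 x w)
  refine ⟨⟨Sum.inr ()⟩, ?_⟩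
  have key : ∀ u : W ⊕ Unit, Relation.ReflTransGen (pend H w).Adj u (Sum.inr ()) := by
    rintro (x | ⟨⟩)
    · exact (hreach x).tail hstep
    · exact Relation.ReflTransGen.refl
  have key2 : ∀ u : W ⊕ Unit, Relation.ReflTransGen (pend H w).Adj (Sum.inr ()) u := by
    rintro (x | ⟨⟩)
    · refine Relation.ReflTransGen.head (b := Sum.inl w) ?_ ?_
      · show s(Sum.inr (), Sum.inl w) ∈ _
        rw [Sym2.eq_swap]
        exact Multiset.mem_add.mpr (Or.inr (Multiset.mem_singleton_self _))
      · exact Relation.ReflTransGen.lift _ hlift _ _ (hc.2 w x)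
    · exact Relation.ReflTransGen.refl
  intro u v
  exact (key u).trans (key2 v)

lemma pend_map (H : Multigraph W) (w : W) (φ : W → V) (v : V) :
    (pend H w).edges.map (Sym2.map (Sum.elim φ fun _ => v))
      = H.edges.map (Sym2.map φ) + {s(φ w, v)} := by
  show (H.edges.map (Sym2.map Sum.inl) + _).map _ = _
  rw [Multiset.map_add, Multiset.map_map, Multiset.map_singleton]
  congr 1
  · apply Multiset.map_congr rfl
    intro e _
    show Sym2.map _ (Sym2.map _ e) = _
    rw [Sym2.map_map]
    rfl

lemma pend_surj {φ : W → V} (hφ : Surjective φ) (v : V) :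
    Surjective (Sum.elim φ fun _ : Unit => v) := by
  intro u
  obtain ⟨x, hx⟩ := hφ u
  exact ⟨Sum.inl x, hx⟩

end Pend

section Walk
variable {V : Type}

def walkEdges : List V → Multiset (Sym2 V)
  | [] => 0
  | [_] => 0
  | a :: b :: l => s(a, b) ::ₘ walkEdges (b :: l)

@[simp] lemma walkEdges_nil : walkEdges ([] : List V) = 0 := rfl
@[simp] lemma walkEdges_single (a : V) : walkEdges [a] = 0 := rfl
@[simp] lemma walkEdges_cons_cons (a b : V) (l : List V) :
    walkEdges (a :: b :: l) = s(a, b) ::ₘ walkEdges (b :: l) := rfl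

lemma card_walkEdges (a : V) (l : List V) :
    Multiset.card (walkEdges (a :: l)) = l.length := by
  induction l generalizing a with
  | nil => rfl
  | cons b l ih => simp [ih b]

lemma getLastD_mem_cons' : ∀ (l : List V) (a : V), l.getLastD a ∈ a :: l := by
  intro l
  induction l with
  | nil => intro a; simp
  | cons b l ih =>
    intro a
    rw [List.getLastD_cons]
    exact List.mem_cons_of_mem a (ih b)

lemma getLastD_mem_of_ne_nil : ∀ (l : List V), l ≠ [] → ∀ d, l.getLastD d ∈ l := by
  intro l
  induction l with
  | nil => intro h; exact absurd rfl h
  | cons b l ih =>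
    intro _ d
    rw [List.getLastD_cons]
    rcases List.eq_nil_or_concat l with rfl | ⟨L, c, rfl⟩
    · simp
    · exact List.mem_cons_of_mem b (ih (by simp) b)

lemma walk_snoc : ∀ (a : V) (l : List V) (c : V),
    walkEdges (a :: l ++ [c]) = walkEdges (a :: l) + {s(l.getLastD a, c)} := by
  intro a l
  induction l generalizing a with
  | nil => intro c; simp [Multiset.singleton_add]
  | cons b l ih =>
    intro c
    show walkEdges (a :: b :: (l ++ [c])) = _
    rw [walkEdges_cons_cons]
    show s(a,b) ::ₘ walkEdges (b :: l ++ [c]) = _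
    rw [ih b c, List.getLastD_cons, walkEdges_cons_cons, Multiset.cons_add]

lemma walk_split : ∀ (xs : List V) (y : V) (ys : List V),
    walkEdges (xs ++ y :: ys) = walkEdges (xs ++ [y]) + walkEdges (y :: ys)
  | [], y, ys => by simp
  | [x], y, ys => by simp [Multiset.singleton_add]
  | x₁ :: x₂ :: xs, y, ys => by
    have := walk_split (x₂ :: xs) y ys
    simp only [List.cons_append, walkEdges_cons_cons] at this ⊢
    rw [this, Multiset.cons_add]

lemma getLastD_append (xs : List V) (y : V) (ys : List V) :
    ∀ d, (xs ++ y :: ys).getLastD d = ys.getLastD y := by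
  induction xs with
  | nil => intro d; rw [List.nil_append, List.getLastD_cons]
  | cons x xs ih => intro d; rw [List.cons_append, List.getLastD_cons, ih]

lemma deg_walk_last : ∀ (a : V) (l : List V) (_ : l ≠ []) (_ : (a :: l).Nodup),
    (Multigraph.mk (walkEdges (a :: l))).deg (l.getLastD a) = 1 := by
  intro a l
  induction l generalizing a with
  | nil => intro h; exact absurd rfl h
  | cons b l ih =>
    intro _ hnd
    rw [List.getLastD_cons]
    rcases List.eq_nil_or_concat l with rfl | hl
    · have hab : a ≠ b := by simp at hnd; tauto
      show (Multigraph.mk (s(a,b) ::ₘ walkEdges [b])).deg (List.getLastD [] b) = 1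
      rw [deg_mk_cons]
      show wt s(a,b) b + _ = 1
      rw [wt_pair hab, walkEdges_single, deg_mk_zero]
    · have hlne : l ≠ [] := by rintro rfl; obtain ⟨l', c, h⟩ := hl; simp at h
      have ihb := ih b hlne (List.Nodup.of_cons hnd)
      set z := l.getLastD b with hz
      have hzmem : z ∈ b :: l := getLastD_mem_cons' l b
      have hza : z ≠ a := by
        intro h; subst h
        exact (List.nodup_cons.mp hnd).1 hzmem
      have hzb : z ≠ b := by
        intro h
        have hzl : z ∈ l := getLastD_mem_of_ne_nil l hlne b
        rw [h] at hzl
        exact (List.nodup_cons.mp (List.Nodup.of_cons hnd)).1 hzl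
      obtain ⟨c, l', rfl⟩ : ∃ c l', l = c :: l' := by
        cases l with
        | nil => exact absurd rfl hlne
        | cons c l' => exact ⟨c, l', rfl⟩
      rw [walkEdges_cons_cons, deg_mk_cons, wt_eq_zero (by simp [Sym2.mem_iff, hza, hzb]), ihb]
end Walk

section Chain
variable {V : Type}

lemma chain_realize : ∀ (l : List V) {W : Type} (_ : Finite W) (H : Multigraph W)
    (φ : W → V) (w : W), Connected H → Surjective φ →
    ∃ (W' : Type) (_ : Finite W') (H' : Multigraph W') (φ' : W' → V) (ι : W → W'),
      Connected H' ∧ Surjective φ' ∧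
      H'.edges.map (Sym2.map φ') = H.edges.map (Sym2.map φ) + walkEdges (φ w :: l) ∧
      (∀ x, φ' (ι x) = φ x) ∧
      (∀ x, x ≠ w → H'.deg (ι x) = H.deg x) ∧
      H'.deg (ι w) ≤ H.deg w + 1 ∧
      (∀ y, (∃ x, y = ι x) ∨ H'.deg y ≤ 2) ∧
      (∀ v' ∈ l, ∃ y, φ' y = v' ∧ H'.deg y ≤ 2) := by
  intro l
  induction l with
  | nil =>
    intro W fin H φ w hc hφ
    refine ⟨W, fin, H, φ, id, hc, hφ, by simp, fun x => rfl, fun x _ => rfl, by simp,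
      fun y => Or.inl ⟨y, rfl⟩, by simp⟩
  | cons b l ih =>
    intro W fin H φ w hc hφ
    obtain ⟨W', fin', H', φ', ι₁, hc', hφ', hmap, hφι, hdegne, hdegw, hall, hlist⟩ :=
      ih (Finite.instSum) (pend H w) (Sum.elim φ fun _ => b) (Sum.inr ())
        (pend_conn hc w) (pend_surj hφ b)
    refine ⟨W', fin', H', φ', ι₁ ∘ Sum.inl, hc', hφ', ?_, ?_, ?_, ?_, ?_, ?_⟩
    · rw [hmap, pend_map]
      show _ = _ + walkEdges (φ w :: b :: l)
      rw [walkEdges_cons_cons, add_assoc, Multiset.singleton_add]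
      rfl
    · intro x; exact hφι (Sum.inl x)
    · intro x hx
      have h1 := hdegne (Sum.inl x) (by simp)
      simp only [Function.comp_apply]
      rw [h1, pend_deg_inl]
      simp [hx]
    · have h1 := hdegne (Sum.inl w) (by simp)
      rw [Function.comp_apply, h1, pend_deg_inl, if_pos rfl]
    · intro y
      rcases hall y with ⟨x₁, rfl⟩ | hle
      · rcases x₁ with x | t
        · exact Or.inl ⟨x, rfl⟩
        · right
          have := hdegw
          have ht : (Sum.inr t : W ⊕ Unit) = Sum.inr () := by rfl
          rw [ht]
          calc H'.deg (ι₁ (Sum.inr ())) ≤ (pend H w).deg (Sum.inr ()) + 1 := hdegw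
          _ = 2 := by rw [pend_deg_inr]
      · exact Or.inr hle
    · intro v' hv'
      rcases List.mem_cons.mp hv' with rfl | hmem
      · refine ⟨ι₁ (Sum.inr ()), ?_, ?_⟩
        · rw [hφι (Sum.inr ())]; rfl
        · calc H'.deg (ι₁ (Sum.inr ())) ≤ (pend H w).deg (Sum.inr ()) + 1 := hdegw
          _ = 2 := by rw [pend_deg_inr]
      · exact hlist v' hmem
end Chain

section Cycle
variable {V : Type}

lemma find_cycle [Finite V] {R : Multiset (Sym2 V)}
    (hloop : ∀ u : V, s(u,u) ∉ R)
    (hmin : ∀ u, (∃ e ∈ R, u ∈ e) → 2 ≤ (Multigraph.mk R).deg u)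
    (hne : R ≠ 0) :
    ∃ (c : V) (t : List V), walkEdges (c :: (t ++ [c])) ≤ R ∧ (∃ e ∈ R, c ∈ e) := by
  classical
  have : Fintype V := Fintype.ofFinite V
  have grow : ∀ (n : ℕ) (a : V) (l : List V), l ≠ [] → (a :: l).Nodup →
      walkEdges (a :: l) ≤ R → Fintype.card V ≤ n + (a :: l).length →
      ∃ (c : V) (t : List V), walkEdges (c :: (t ++ [c])) ≤ R ∧ (∃ e ∈ R, c ∈ e) := by
    intro n
    induction n with
    | zero =>
      intro a l hlne hnd hle hcard
      set z := l.getLastD a with hz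
      set P := walkEdges (a :: l) with hP
      have hdegP : (Multigraph.mk P).deg z = 1 := deg_walk_last a l hlne hnd
      have hPR : P + (R - P) = R := add_tsub_cancel_of_le hle
      have hdegsplit : (Multigraph.mk R).deg z
          = (Multigraph.mk P).deg z + (Multigraph.mk (R - P)).deg z := by
        rw [← hPR, deg_mk_add]; rw [hPR]
      have hzsup : ∃ e ∈ R, z ∈ e := by
        rw [supported_iff, hdegsplit, hdegP]; omega
      have hdegR := hmin z hzsup
      have : 1 ≤ (Multigraph.mk (R - P)).deg z := by omega
      obtain ⟨e', he'mem, hze'⟩ := supported_iff.mpr this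
      obtain ⟨c', he'⟩ := Sym2.mem_iff_exists.mp hze'
      subst he'
      have hzc' : c' ≠ z := by
        rintro rfl
        exact hloop z (Multiset.mem_of_le (tsub_le_self) he'mem)
      have hPe'R : P + {s(z, c')} ≤ R := by
        calc P + {s(z,c')} ≤ P + (R - P) :=
          add_le_add_right (Multiset.singleton_le.mpr he'mem) P
        _ = R := hPR
      by_cases hc'mem : c' ∈ a :: l
      · obtain ⟨s, t, hst⟩ := List.append_of_mem hc'mem
        have hz2 : z = t.getLastD c' := by
          cases s with
          | nil =>
            obtain ⟨rfl, rfl⟩ : a = c' ∧ l = t := by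
              rw [List.nil_append] at hst
              exact ⟨(List.cons.injEq _ _ _ _ ▸ hst).1, (List.cons.injEq _ _ _ _ ▸ hst).2⟩
            rfl
          | cons x s' =>
            obtain ⟨rfl, rfl⟩ : a = x ∧ l = s' ++ c' :: t := by
              rw [List.cons_append] at hst
              exact ⟨(List.cons.injEq _ _ _ _ ▸ hst).1, (List.cons.injEq _ _ _ _ ▸ hst).2⟩
            rw [hz, getLastD_append]
        refine ⟨c', t, ?_, ?_⟩
        · have hcyc : walkEdges (c' :: (t ++ [c']))
              = walkEdges (c' :: t) + {s(t.getLastD c', c')} := walk_snoc c' t c'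
          have hsub : walkEdges (c' :: t) ≤ P := by
            rw [hP, hst, walk_split]
            exact Multiset.le_add_left _ _
          rw [hcyc, ← hz2]
          calc walkEdges (c' :: t) + {s(z, c')} ≤ P + {s(z,c')} :=
            add_le_add_left hsub _
          _ ≤ R := hPe'R
        · exact ⟨s(z,c'), Multiset.mem_of_le tsub_le_self he'mem, by simp [Sym2.mem_iff]⟩
      · exfalso
        have hnd' : ((a :: l) ++ [c']).Nodup := by
          rw [List.nodup_append]
          refine ⟨hnd, by simp, ?_⟩
          intro x hx
          simp only [List.mem_singleton]
          rintro _ rfl rfl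
          exact hc'mem hx
        have := hnd'.length_le_card
        simp only [List.length_append, List.length_cons, List.length_singleton] at this
        simp only [Nat.zero_add, List.length_cons] at hcard
        omega
    | succ n ih =>
      intro a l hlne hnd hle hcard
      set z := l.getLastD a with hz
      set P := walkEdges (a :: l) with hP
      have hdegP : (Multigraph.mk P).deg z = 1 := deg_walk_last a l hlne hnd
      have hPR : P + (R - P) = R := add_tsub_cancel_of_le hle
      have hdegsplit : (Multigraph.mk R).deg z
          = (Multigraph.mk P).deg z + (Multigraph.mk (R - P)).deg z := by
        rw [← hPR, deg_mk_add]; rw [hPR]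
      have hzsup : ∃ e ∈ R, z ∈ e := by
        rw [supported_iff, hdegsplit, hdegP]; omega
      have hdegR := hmin z hzsup
      have : 1 ≤ (Multigraph.mk (R - P)).deg z := by omega
      obtain ⟨e', he'mem, hze'⟩ := supported_iff.mpr this
      obtain ⟨c', he'⟩ := Sym2.mem_iff_exists.mp hze'
      subst he'
      have hzc' : c' ≠ z := by
        rintro rfl
        exact hloop z (Multiset.mem_of_le (tsub_le_self) he'mem)
      have hPe'R : P + {s(z, c')} ≤ R := by
        calc P + {s(z,c')} ≤ P + (R - P) :=
          add_le_add_right (Multiset.singleton_le.mpr he'mem) P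
        _ = R := hPR
      by_cases hc'mem : c' ∈ a :: l
      · obtain ⟨s, t, hst⟩ := List.append_of_mem hc'mem
        have hz2 : z = t.getLastD c' := by
          cases s with
          | nil =>
            obtain ⟨rfl, rfl⟩ : a = c' ∧ l = t := by
              rw [List.nil_append] at hst
              exact ⟨(List.cons.injEq _ _ _ _ ▸ hst).1, (List.cons.injEq _ _ _ _ ▸ hst).2⟩
            rfl
          | cons x s' =>
            obtain ⟨rfl, rfl⟩ : a = x ∧ l = s' ++ c' :: t := by
              rw [List.cons_append] at hst
              exact ⟨(List.cons.injEq _ _ _ _ ▸ hst).1, (List.cons.injEq _ _ _ _ ▸ hst).2⟩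
            rw [hz, getLastD_append]
        refine ⟨c', t, ?_, ?_⟩
        · have hcyc : walkEdges (c' :: (t ++ [c']))
              = walkEdges (c' :: t) + {s(t.getLastD c', c')} := walk_snoc c' t c'
          have hsub : walkEdges (c' :: t) ≤ P := by
            rw [hP, hst, walk_split]
            exact Multiset.le_add_left _ _
          rw [hcyc, ← hz2]
          calc walkEdges (c' :: t) + {s(z, c')} ≤ P + {s(z,c')} :=
            add_le_add_left hsub _
          _ ≤ R := hPe'R
        · exact ⟨s(z,c'), Multiset.mem_of_le tsub_le_self he'mem, by simp [Sym2.mem_iff]⟩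
      · -- extend the path
        have hnd' : (a :: (l ++ [c'])).Nodup := by
          show ((a :: l) ++ [c']).Nodup
          rw [List.nodup_append]
          refine ⟨hnd, by simp, ?_⟩
          intro x hx
          simp only [List.mem_singleton]
          rintro _ rfl rfl
          exact hc'mem hx
        have hle' : walkEdges (a :: (l ++ [c'])) ≤ R := by
          have : walkEdges (a :: l ++ [c']) = P + {s(z, c')} := by
            rw [walk_snoc, hz, hP]
          rw [show a :: (l ++ [c']) = a :: l ++ [c'] from rfl, this]
          exact hPe'R
        refine ih a (l ++ [c']) (by simp) hnd' hle' ?_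
        simp only [List.length_cons, List.length_append, List.length_singleton] at hcard ⊢
        omega
  obtain ⟨e, he⟩ := Multiset.exists_mem_of_ne_zero hne
  obtain ⟨a, b, rfl⟩ : ∃ a b, e = s(a,b) := by
    induction e using Sym2.ind with
    | _ a b => exact ⟨a, b, rfl⟩
  have hab : a ≠ b := by rintro rfl; exact hloop a he
  refine grow (Fintype.card V) a [b] (by simp) (by simp [hab]) ?_ (by simp)
  show walkEdges [a, b] ≤ R
  have : walkEdges [a, b] = {s(a,b)} := rfl
  rw [this]
  exact Multiset.singleton_le.mpr he
end Cycle

section Main2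
variable {V : Type}

lemma main2 [Finite V] (k : ℕ) (hk : 2 ≤ k) :
    ∀ (n : ℕ) (R : Multiset (Sym2 V)), Multiset.card R ≤ n →
    ∀ {W : Type} (_ : Finite W) (H : Multigraph W) (φ : W → V),
      Connected H → Surjective φ → (∀ x, H.deg x ≤ k + 1) →
      (∀ u, (∃ e ∈ R, u ∈ e) → ∃ w, φ w = u ∧ H.deg w ≤ k) →
      ∃ (W' : Type) (_ : Finite W') (H' : Multigraph W') (φ' : W' → V),
        Connected H' ∧ Surjective φ' ∧ (∀ x, H'.deg x ≤ k + 1) ∧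
        H'.edges.map (Sym2.map φ') = H.edges.map (Sym2.map φ) + R := by
  intro n
  induction n with
  | zero =>
    intro R hcard W fin H φ hc hφ hdeg _
    have : R = 0 := Multiset.card_eq_zero.mp (Nat.le_zero.mp hcard)
    subst this
    exact ⟨W, fin, H, φ, hc, hφ, hdeg, by simp⟩
  | succ n ih =>
    intro R hcard W fin H φ hc hφ hdeg hsp
    classical
    by_cases hR0 : R = 0
    · subst hR0
      exact ⟨W, fin, H, φ, hc, hφ, hdeg, by simp⟩
    -- generic step: realize the walk `φ w :: l` and recurse
    have step : ∀ (l : List V) (w : W), H.deg w ≤ k →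
        walkEdges (φ w :: l) ≤ R → 1 ≤ Multiset.card (walkEdges (φ w :: l)) →
        (∀ u', (∃ e ∈ R - walkEdges (φ w :: l), u' ∈ e) → u' ∈ l ∨ u' ≠ φ w) →
        ∃ (W' : Type) (_ : Finite W') (H' : Multigraph W') (φ' : W' → V),
          Connected H' ∧ Surjective φ' ∧ (∀ x, H'.deg x ≤ k + 1) ∧
          H'.edges.map (Sym2.map φ') = H.edges.map (Sym2.map φ) + R := by
      intro l w hwdeg hCR hCcard hinv
      set C := walkEdges (φ w :: l) with hCdef
      obtain ⟨W₁, fin₁, H₁, φ₁, ι, hc₁, hφ₁, hmap, hφι, hdegne, hdegw, hall, hlist⟩ :=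
        chain_realize l fin H φ w hc hφ
      have hCsum : C + (R - C) = R := add_tsub_cancel_of_le hCR
      have hcard' : Multiset.card (R - C) ≤ n := by
        have := congrArg Multiset.card hCsum
        rw [Multiset.card_add] at this
        omega
      have hdeg₁ : ∀ y, H₁.deg y ≤ k + 1 := by
        intro y
        rcases hall y with ⟨x, rfl⟩ | hle
        · by_cases hxw : x = w
          · subst hxw
            calc H₁.deg (ι x) ≤ H.deg x + 1 := hdegw
            _ ≤ k + 1 := by have := hwdeg; omega
          · rw [hdegne x hxw]; exact hdeg x
        · omega
      have hsp₁ : ∀ u, (∃ e ∈ R - C, u ∈ e) → ∃ w', φ₁ w' = u ∧ H₁.deg w' ≤ k := by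
        intro u hu
        rcases hinv u hu with hul | hune
        · obtain ⟨y, hy1, hy2⟩ := hlist u hul
          exact ⟨y, hy1, by omega⟩
        · obtain ⟨e, he, hue⟩ := hu
          obtain ⟨w', hw'1, hw'2⟩ := hsp u ⟨e, Multiset.mem_of_le tsub_le_self he, hue⟩
          have hw'w : w' ≠ w := by
            rintro rfl
            exact hune hw'1.symm
          exact ⟨ι w', by rw [hφι]; exact hw'1, by rw [hdegne w' hw'w]; exact hw'2⟩
      obtain ⟨W₂, fin₂, H₂, φ₂, hc₂, hφ₂, hdeg₂, hmap₂⟩ :=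
        ih (R - C) hcard' fin₁ H₁ φ₁ hc₁ hφ₁ hdeg₁ hsp₁
      refine ⟨W₂, fin₂, H₂, φ₂, hc₂, hφ₂, hdeg₂, ?_⟩
      rw [hmap₂, hmap, add_assoc, hCsum]
    by_cases hloopcase : ∃ u, s(u,u) ∈ R
    · obtain ⟨u, hu⟩ := hloopcase
      obtain ⟨w, hwφ, hwdeg⟩ := hsp u ⟨s(u,u), hu, by simp [Sym2.mem_iff]⟩
      have hC : walkEdges (φ w :: [u]) = {s(u,u)} := by
        rw [hwφ]; rfl
      refine step [u] w hwdeg ?_ ?_ ?_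
      · rw [hC]; exact Multiset.singleton_le.mpr hu
      · rw [hC]; rfl
      · intro u' _
        by_cases h : u' = u
        · left; simp [h]
        · right; rw [hwφ]; exact h
    · push_neg at hloopcase
      by_cases hdeg1 : ∃ u, (∃ e ∈ R, u ∈ e) ∧ (Multigraph.mk R).deg u ≤ 1
      · obtain ⟨u, ⟨e, heR, hue⟩, hdu⟩ := hdeg1
        obtain ⟨b, rfl⟩ := Sym2.mem_iff_exists.mp hue
        have hbu : b ≠ u := by
          rintro rfl
          exact hloopcase b heR
        obtain ⟨w, hwφ, hwdeg⟩ := hsp u ⟨s(u,b), heR, by simp [Sym2.mem_iff]⟩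
        have hC : walkEdges (φ w :: [b]) = {s(u,b)} := by
          rw [hwφ]; rfl
        have hdegsplit : (Multigraph.mk R).deg u
            = 1 + (Multigraph.mk (R - {s(u,b)})).deg u := by
          have hsum : {s(u,b)} + (R - {s(u,b)}) = R :=
            add_tsub_cancel_of_le (Multiset.singleton_le.mpr heR)
          conv_lhs => rw [← hsum]
          rw [deg_mk_add, deg_mk_singleton, wt_pair' hbu.symm]
        refine step [b] w hwdeg ?_ ?_ ?_
        · rw [hC]; exact Multiset.singleton_le.mpr heR
        · rw [hC]; rfl
        · intro u' hu'
          by_cases h : u' = b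
          · left; simp [h]
          · right
            rw [hwφ]
            rintro rfl
            rw [hC] at hu'
            have h1 := supported_iff.mp hu'
            omega
      · push_neg at hdeg1
        have hmin2 : ∀ u, (∃ e ∈ R, u ∈ e) → 2 ≤ (Multigraph.mk R).deg u := by
          intro u hu
          have := hdeg1 u hu
          omega
        obtain ⟨c, t, hcyc, hcsup⟩ := find_cycle hloopcase hmin2 hR0
        obtain ⟨w, hwφ, hwdeg⟩ := hsp c hcsup
        refine step (t ++ [c]) w hwdeg ?_ ?_ ?_
        · rw [hwφ]; exact hcyc
        · rw [card_walkEdges]; simp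
        · intro u' _
          by_cases h : u' ∈ t ++ [c]
          · left; exact h
          · right
            rw [hwφ]
            rintro rfl
            exact h (by simp)
end Main2

section Main1
variable {V : Type}

lemma main1 (hV2 : ∀ a b c : V, a = b ∨ a = c ∨ b = c) :
    ∀ (n : ℕ) (R : Multiset (Sym2 V)), Multiset.card R ≤ n →
    ∀ {W : Type} (_ : Finite W) (H : Multigraph W) (φ : W → V),
      Connected H → Surjective φ → (∀ x, H.deg x ≤ 2) →
      (∀ u, (∃ e ∈ R, u ∈ e) →
        (∃ w, φ w = u ∧ H.deg w ≤ 1) ∨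
        (∃ v, (∃ w, φ w = v ∧ H.deg w ≤ 1) ∧ ∀ e ∈ R, u ∈ e → e = s(u,v))) →
      ∃ (W' : Type) (_ : Finite W') (H' : Multigraph W') (φ' : W' → V),
        Connected H' ∧ Surjective φ' ∧ (∀ x, H'.deg x ≤ 2) ∧
        H'.edges.map (Sym2.map φ') = H.edges.map (Sym2.map φ) + R := by
  intro n
  induction n with
  | zero =>
    intro R hcard W fin H φ hc hφ hdeg _
    have : R = 0 := Multiset.card_eq_zero.mp (Nat.le_zero.mp hcard)
    subst this
    exact ⟨W, fin, H, φ, hc, hφ, hdeg, by simp⟩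
  | succ n ih =>
    intro R hcard W fin H φ hc hφ hdeg hsp
    classical
    by_cases hR0 : R = 0
    · subst hR0
      exact ⟨W, fin, H, φ, hc, hφ, hdeg, by simp⟩
    -- generic step: given a spare preimage w of a and an edge s(a,b) ∈ R, attach pendant
    have step : ∀ (a b : V) (w : W), s(a,b) ∈ R → φ w = a → H.deg w ≤ 1 →
        (∀ e' ∈ R, (∀ u, s(u,u) ≠ e')) → a ≠ b →
        ∃ (W' : Type) (_ : Finite W') (H' : Multigraph W') (φ' : W' → V),
          Connected H' ∧ Surjective φ' ∧ (∀ x, H'.deg x ≤ 2) ∧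
          H'.edges.map (Sym2.map φ') = H.edges.map (Sym2.map φ) + R := by
      intro a b w heR hwa hwdeg hnl hab
      set R' := R - {s(a,b)} with hR'
      have hsum : {s(a,b)} + R' = R := add_tsub_cancel_of_le (Multiset.singleton_le.mpr heR)
      have hcard' : Multiset.card R' ≤ n := by
        have := congrArg Multiset.card hsum
        rw [Multiset.card_add] at this
        simp at this
        omega
      have hdeg₁ : ∀ x, (pend H w).deg x ≤ 2 := by
        rintro (x | t)
        · rw [pend_deg_inl]
          by_cases hxw : x = w
          · subst hxw; rw [if_pos rfl]; omega
          · rw [if_neg hxw]; have := hdeg x; omega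
        · rw [pend_deg_inr]; omega
      have hRle : R' ≤ R := tsub_le_self
      have hsp₁ : ∀ u, (∃ e ∈ R', u ∈ e) →
          (∃ w', Sum.elim φ (fun _ : Unit => b) w' = u ∧ (pend H w).deg w' ≤ 1) ∨
          (∃ v, (∃ w', Sum.elim φ (fun _ : Unit => b) w' = v ∧ (pend H w).deg w' ≤ 1) ∧
            ∀ e ∈ R', u ∈ e → e = s(u,v)) := by
        intro u hu
        have hbspare : ∃ w', Sum.elim φ (fun _ : Unit => b) w' = b ∧ (pend H w).deg w' ≤ 1 :=
          ⟨Sum.inr (), rfl, by rw [pend_deg_inr]⟩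
        have huab : u = a ∨ u = b := by
          rcases hV2 u a b with h | h | h
          · exact Or.inl h
          · exact Or.inr h
          · exact absurd h hab
        rcases huab with rfl | rfl
        · -- u = a : use right clause with v = b
          right
          refine ⟨b, hbspare, ?_⟩
          intro e' he' hue'
          obtain ⟨c', rfl⟩ := Sym2.mem_iff_exists.mp hue'
          have hc'u : c' ≠ u := by
            rintro rfl
            exact hnl _ (Multiset.mem_of_le hRle he') c' rfl
          rcases hV2 u b c' with h | h | h
          · exact absurd h hab
          · exact absurd h.symm hc'u
          · rw [← h]
        · exact Or.inl hbspare
      obtain ⟨W₂, fin₂, H₂, φ₂, hc₂, hφ₂, hdeg₂, hmap₂⟩ :=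
        ih R' hcard' Finite.instSum (pend H w) (Sum.elim φ fun _ => b)
          (pend_conn hc w) (pend_surj hφ b) hdeg₁ hsp₁
      refine ⟨W₂, fin₂, H₂, φ₂, hc₂, hφ₂, hdeg₂, ?_⟩
      rw [hmap₂, pend_map, hwa, add_assoc, Multiset.singleton_add]
      rw [show s(a,b) ::ₘ R' = {s(a,b)} + R' from (Multiset.singleton_add _ _).symm, hsum]
    by_cases hloopcase : ∃ u, s(u,u) ∈ R
    · -- loop case: attach the loop as a pendant at a spare preimage of u
      obtain ⟨u, hu⟩ := hloopcase
      have hspu : ∃ w, φ w = u ∧ H.deg w ≤ 1 := by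
        rcases hsp u ⟨s(u,u), hu, by simp [Sym2.mem_iff]⟩ with h | ⟨v, hv, hall⟩
        · exact h
        · have := hall s(u,u) hu (by simp [Sym2.mem_iff])
          rw [Sym2.eq_iff] at this
          rcases this with ⟨-, rfl⟩ | ⟨rfl, -⟩
          · exact hv
          · exact hv
      obtain ⟨w, hwu, hwdeg⟩ := hspu
      set R' := R - {s(u,u)} with hR'
      have hsum : {s(u,u)} + R' = R := add_tsub_cancel_of_le (Multiset.singleton_le.mpr hu)
      have hcard' : Multiset.card R' ≤ n := by
        have := congrArg Multiset.card hsum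
        rw [Multiset.card_add] at this
        simp at this
        omega
      have hdeg₁ : ∀ x, (pend H w).deg x ≤ 2 := by
        rintro (x | t)
        · rw [pend_deg_inl]
          by_cases hxw : x = w
          · subst hxw; rw [if_pos rfl]; omega
          · rw [if_neg hxw]; have := hdeg x; omega
        · rw [pend_deg_inr]; omega
      have hRle : R' ≤ R := tsub_le_self
      have hsp₁ : ∀ u', (∃ e ∈ R', u' ∈ e) →
          (∃ w', Sum.elim φ (fun _ : Unit => u) w' = u' ∧ (pend H w).deg w' ≤ 1) ∨
          (∃ v, (∃ w', Sum.elim φ (fun _ : Unit => u) w' = v ∧ (pend H w).deg w' ≤ 1) ∧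
            ∀ e ∈ R', u' ∈ e → e = s(u',v)) := by
        intro u' hu'
        have huspare : ∃ w', Sum.elim φ (fun _ : Unit => u) w' = u ∧ (pend H w).deg w' ≤ 1 :=
          ⟨Sum.inr (), rfl, by rw [pend_deg_inr]⟩
        by_cases h : u' = u
        · subst h; exact Or.inl huspare
        · obtain ⟨e, he, hue⟩ := hu'
          rcases hsp u' ⟨e, Multiset.mem_of_le hRle he, hue⟩ with ⟨w', h1, h2⟩ | ⟨v, ⟨w', h1, h2⟩, hall⟩
          · have hw'w : w' ≠ w := by rintro rfl; exact h (h1.symm.trans hwu)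
            left
            exact ⟨Sum.inl w', h1, by rw [pend_deg_inl, if_neg hw'w]; omega⟩
          · right
            by_cases hvu : v = u
            · subst hvu
              exact ⟨v, huspare, fun e' he' hue' => hall e' (Multiset.mem_of_le hRle he') hue'⟩
            · have hw'w : w' ≠ w := by rintro rfl; exact hvu (h1.symm.trans hwu)
              exact ⟨v, ⟨Sum.inl w', h1, by rw [pend_deg_inl, if_neg hw'w]; omega⟩,
                fun e' he' hue' => hall e' (Multiset.mem_of_le hRle he') hue'⟩
      obtain ⟨W₂, fin₂, H₂, φ₂, hc₂, hφ₂, hdeg₂, hmap₂⟩ :=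
        ih R' hcard' Finite.instSum (pend H w) (Sum.elim φ fun _ => u)
          (pend_conn hc w) (pend_surj hφ u) hdeg₁ hsp₁
      refine ⟨W₂, fin₂, H₂, φ₂, hc₂, hφ₂, hdeg₂, ?_⟩
      rw [hmap₂, pend_map, hwu, add_assoc, Multiset.singleton_add]
      rw [show s(u,u) ::ₘ R' = {s(u,u)} + R' from (Multiset.singleton_add _ _).symm, hsum]
    · -- no loops
      push_neg at hloopcase
      have hnl : ∀ e' ∈ R, (∀ u, s(u,u) ≠ e') := by
        intro e' he' u h
        rw [← h] at he'
        exact hloopcase u he'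
      obtain ⟨e, he⟩ := Multiset.exists_mem_of_ne_zero hR0
      obtain ⟨a, b, rfl⟩ : ∃ a b, e = s(a,b) := by
        induction e using Sym2.ind with
        | _ a b => exact ⟨a, b, rfl⟩
      have hab : a ≠ b := by rintro rfl; exact hloopcase a he
      have hsab : (∃ w, φ w = a ∧ H.deg w ≤ 1) ∨ (∃ w, φ w = b ∧ H.deg w ≤ 1) := by
        rcases hsp a ⟨s(a,b), he, by simp [Sym2.mem_iff]⟩ with h | ⟨v, hv, hall⟩
        · exact Or.inl h
        · have := hall s(a,b) he (by simp [Sym2.mem_iff])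
          rw [Sym2.eq_iff] at this
          rcases this with ⟨-, rfl⟩ | ⟨rfl, rfl⟩
          · exact Or.inr hv
          · exact Or.inl hv
      rcases hsab with ⟨w, hwa, hwdeg⟩ | ⟨w, hwb, hwdeg⟩
      · exact step a b w he hwa hwdeg hnl hab
      · exact step b a w (by rwa [Sym2.eq_swap] at he) hwb hwdeg hnl hab.symm
end Main1

section Final

lemma two_point {W : Type} (H : Multigraph W) (hc : Connected H) (hdeg : ∀ x, H.deg x ≤ 1) :
    ∀ a b c : W, a = b ∨ a = c ∨ b = c := by
  have heta : ∀ x : W, H.deg x = (Multigraph.mk H.edges).deg x := fun _ => rfl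
  have f2 : ∀ x, ¬ H.Adj x x := by
    intro x hx
    have h2 : 2 ≤ (Multigraph.mk H.edges).deg x := by
      calc 2 = (Multigraph.mk ({s(x,x)} : Multiset (Sym2 W))).deg x := by
            rw [deg_mk_singleton, wt_loop]
      _ ≤ _ := deg_mono (Multiset.singleton_le.mpr hx) x
    have := hdeg x
    rw [heta] at this
    omega
  have f1 : ∀ x y y', H.Adj x y → H.Adj x y' → s(x,y) ≠ s(x,y') → False := by
    intro x y y' h1 h2 hne
    have := two_le_deg (A := H.edges) (v := x) h1 h2 hne (by simp [Sym2.mem_iff]) (by simp [Sym2.mem_iff])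
    have h3 := hdeg x
    rw [heta] at h3
    omega
  have key : ∀ x z, Relation.ReflTransGen H.Adj x z → z = x ∨ H.Adj x z := by
    intro x z h
    induction h with
    | refl => exact Or.inl rfl
    | @tail b z hxb hbz ihb =>
      rcases ihb with rfl | hxb'
      · exact Or.inr hbz
      · have hxbne : x ≠ b := by rintro rfl; exact f2 x hxb'
        by_cases heq : s(b,x) = s(b,z)
        · rw [Sym2.eq_iff] at heq
          rcases heq with ⟨-, rfl⟩ | ⟨rfl, rfl⟩
          · exact Or.inl rfl
          · exact absurd rfl hxbne
        · refine absurd heq (fun hne => ?_)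
          have hbx : H.Adj b x := by
            show s(b,x) ∈ H.edges
            rw [Sym2.eq_swap]
            exact hxb'
          exact f1 b x z hbx hbz hne
  intro a b c
  by_contra hcon
  push_neg at hcon
  obtain ⟨hab, hac, hbc⟩ := hcon
  have h1 : H.Adj a b := by
    rcases key a b (hc.2 a b) with h | h
    · exact absurd h.symm hab
    · exact h
  have h2 : H.Adj a c := by
    rcases key a c (hc.2 a c) with h | h
    · exact absurd h.symm hac
    · exact h
  refine f1 a b c h1 h2 ?_
  intro hh
  rw [Sym2.eq_iff] at hh
  rcases hh with ⟨-, h⟩ | ⟨h, -⟩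
  · exact hbc h
  · exact hac h

lemma contains_to_isKTrail {V : Type} [Finite V] (G : Multigraph V) (j : ℕ) (hj : 1 ≤ j)
    (h : ContainsKTrail G j) : IsKTrail G (j + 1) := by
  classical
  obtain ⟨U, hU, W, finW, H, φ, hconn, hdegj, him⟩ := h
  rw [isHomImage_iff] at him
  obtain ⟨hφ, hmapU⟩ := him
  set R := G.edges - U with hR
  have hsum : U + R = G.edges := add_tsub_cancel_of_le hU
  rcases Nat.lt_or_ge j 2 with hj1 | hj2
  · have hj1' : j = 1 := by omega
    subst hj1'
    have hV2 : ∀ a b c : V, a = b ∨ a = c ∨ b = c := by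
      intro a b c
      by_contra hcon
      push_neg at hcon
      obtain ⟨hab, hac, hbc⟩ := hcon
      obtain ⟨wa, hwa⟩ := hφ a
      obtain ⟨wb, hwb⟩ := hφ b
      obtain ⟨wc, hwc⟩ := hφ c
      rcases two_point H hconn hdegj wa wb wc with h | h | h
      · exact hab (by rw [← hwa, ← hwb, h])
      · exact hac (by rw [← hwa, ← hwc, h])
      · exact hbc (by rw [← hwb, ← hwc, h])
    obtain ⟨W', fin', H', φ', hc', hφ', hdeg', hmap'⟩ :=
      main1 hV2 (Multiset.card R) R le_rfl finW H φ hconn hφ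
        (fun x => by have := hdegj x; omega)
        (fun u _ => Or.inl (by obtain ⟨w, hw⟩ := hφ u; exact ⟨w, hw, hdegj w⟩))
    refine ⟨W', fin', H', φ', hc', fun w => hdeg' w, isHomImage_iff.mpr ⟨hφ', ?_⟩⟩
    rw [hmap', hmapU]
    exact hsum
  · obtain ⟨W', fin', H', φ', hc', hφ', hdeg', hmap'⟩ :=
      main2 j hj2 (Multiset.card R) R le_rfl finW H φ hconn hφ
        (fun x => by have := hdegj x; omega)
        (fun u _ => by obtain ⟨w, hw⟩ := hφ u; exact ⟨w, hw, hdegj w⟩)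
    refine ⟨W', fin', H', φ', hc', fun w => hdeg' w, isHomImage_iff.mpr ⟨hφ', ?_⟩⟩
    rw [hmap', hmapU]
    exact hsum

end Final




/-- If `kstar` is the smallest positive integer such that `G` is a `kstar`-trail, then the
smallest positive integer `k` for which `G` contains a `k`-trail is `kstar` or `kstar - 1`. -/
theorem contains_min_kTrail_near {V : Type} [Finite V]
    (hV : 2 ≤ Nat.card V)
    (G : Multigraph V) (kstar : ℕ) (hk1 : 1 ≤ kstar)
    (hks : IsKTrail G kstar)
    (hmin : ∀ k : ℕ, 1 ≤ k → IsKTrail G k → kstar ≤ k) :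
    ∃ k : ℕ, 1 ≤ k ∧ ContainsKTrail G k ∧
      (∀ k' : ℕ, 1 ≤ k' → ContainsKTrail G k' → k ≤ k') ∧
      (k = kstar ∨ k + 1 = kstar) := by
  classical
  have hcontains : ContainsKTrail G kstar := ⟨G.edges, le_rfl, hks⟩
  have hP : ∃ k, 1 ≤ k ∧ ContainsKTrail G k := ⟨kstar, hk1, hcontains⟩
  set k := Nat.find hP with hk
  have hspec := Nat.find_spec hP
  have hmink : ∀ k', 1 ≤ k' → ContainsKTrail G k' → k ≤ k' :=
    fun k' h1 h2 => Nat.find_min' hP ⟨h1, h2⟩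
  have hkle : k ≤ kstar := hmink kstar hk1 hcontains
  have hup : kstar ≤ k + 1 :=
    hmin (k + 1) (by omega) (contains_to_isKTrail G k hspec.1 hspec.2)
  exact ⟨k, hspec.1, hspec.2, hmink, by omega⟩
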